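/- Let (δ*, w*) be a pure-strategy Nash equilibrium of the zero-sum game where the row player chooses a perturbation function δ: D → B(ε) maximizing U(δ,w) = E[max(0, 1 - y·w^⊤(x+δ(x,y)))] + (λ/2)‖w‖₂² and the column player chooses w minimizing it. If feature i is non-robust, i.e. |μᵢ| ≤ ε where E[xᵢ|y] = yμᵢ, then wᵢ* = 0. -/

import Mathlib

open MeasureTheory Finset
open scoped ENNReal

/-- sign-like function with values in `{-1,1}`. -/
noncomputable def sg (c : ℝ) : ℝ := if c < 0 then -1 else 1

lemma sg_abs (c : ℝ) : |sg c| = 1 := by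
  unfold sg; split <;> norm_num

lemma mul_sg (c : ℝ) : c * sg c = |c| := by
  unfold sg; split
  · rw [abs_of_neg ‹_›]; ring
  · rw [abs_of_nonneg (le_of_not_gt ‹_›)]; ring

lemma measurable_sg : Measurable sg := by
  unfold sg
  exact Measurable.ite (measurableSet_lt measurable_id measurable_const)
    measurable_const measurable_const

lemma sum_mul_sg {m : ℕ} (w : Fin m → ℝ) (c : ℝ) :
    ∑ j, w j * (c * sg (w j)) = c * ∑ j, |w j| := by
  rw [Finset.mul_sum]
  refine Finset.sum_congr rfl fun j _ => ?_
  rw [← mul_sg (w j)]; ring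

lemma sum_split {m : ℕ} (i : Fin m) (f : Fin m → ℝ) :
    ∑ j, f j = f i + ∑ j, Function.update f i 0 j := by
  rw [Finset.sum_update_of_mem (Finset.mem_univ i),
    Finset.sum_eq_sum_sdiff_singleton_add (Finset.mem_univ i)]
  ring

lemma robust_eval {m : ℕ} (w x : Fin m → ℝ) (ε s : ℝ) (hss : s * sg s = 1) :
    1 - s * ∑ j, w j * (x j + -(ε * sg s * sg (w j)))
      = 1 - s * ∑ j, w j * x j + ε * ∑ j, |w j| := by
  have h1 : ∑ j, w j * (x j + -(ε * sg s * sg (w j)))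
      = ∑ j, w j * x j - (ε * sg s) * ∑ j, |w j| := by
    rw [← sum_mul_sg w (ε * sg s), ← Finset.sum_sub_distrib]
    exact Finset.sum_congr rfl fun j _ => by ring
  calc 1 - s * ∑ j, w j * (x j + -(ε * sg s * sg (w j)))
      = 1 - s * (∑ j, w j * x j - (ε * sg s) * ∑ j, |w j|) := by rw [h1]
    _ = 1 - s * ∑ j, w j * x j + (s * sg s) * (ε * ∑ j, |w j|) := by ring
    _ = 1 - s * ∑ j, w j * x j + ε * ∑ j, |w j| := by rw [hss, one_mul]

lemma eval_integrable {d : ℕ} (η : Fin d → Measure ℝ) [∀ j, IsProbabilityMeasure (η j)]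
    (j : Fin d) (h : Integrable (fun t : ℝ => t) (η j)) :
    Integrable (fun x : Fin d → ℝ => x j) (Measure.pi η) := by
  obtain ⟨n, rfl⟩ := Nat.exists_eq_succ_of_ne_zero (Nat.pos_iff_ne_zero.mp j.pos)
  have hmp := measurePreserving_piFinSuccAbove (fun k => η k) j
  have h2 : Integrable (fun z : ℝ × (Fin n → ℝ) => z.1)
      ((η j).prod (Measure.pi fun k => η (j.succAbove k))) := by
    simpa using h.mul_prod (integrable_const (1:ℝ))
  have h3 : Integrable (fun z : ℝ × (Fin n → ℝ) => z.1)
      (Measure.map (MeasurableEquiv.piFinSuccAbove (fun _ => ℝ) j) (Measure.pi η)) := by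
    rw [hmp.map_eq]; exact h2
  have := (integrable_map_measure h3.aestronglyMeasurable
    (MeasurableEquiv.piFinSuccAbove (fun _ => ℝ) j).measurable.aemeasurable).1 h3
  exact this

lemma robust_integrable {d : ℕ} (η : Fin d → Measure ℝ) [∀ j, IsProbabilityMeasure (η j)]
    (hint : ∀ j, Integrable (fun t : ℝ => t) (η j)) (s c : ℝ) (w : Fin d → ℝ) :
    Integrable (fun x : Fin d → ℝ => max 0 (1 - s * ∑ j, w j * x j + c)) (Measure.pi η) := by
  have hmeas : Measurable fun x : Fin d → ℝ => max 0 (1 - s * ∑ j, w j * x j + c) := by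
    apply measurable_const.max
    apply Measurable.add_const _ c
    apply Measurable.const_sub
    exact (Finset.measurable_sum univ fun j _ =>
      (measurable_pi_apply j : Measurable fun x : Fin d → ℝ => x j).const_mul (w j)).const_mul s
  refine Integrable.mono' (g := fun x => (1 + |c|) + |s| * ∑ j, |w j| * |x j|) ?_
    hmeas.aestronglyMeasurable ?_
  · exact (integrable_const _).add
      ((integrable_finset_sum univ fun j _ =>
        (eval_integrable η j (hint j)).abs.const_mul (|w j|)).const_mul (|s|))
  · refine Filter.Eventually.of_forall fun x => ?_
    have h0 : |max 0 (1 - s * ∑ j, w j * x j + c)| ≤ |1 - s * ∑ j, w j * x j + c| := by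
      rw [abs_of_nonneg (le_max_left _ _)]
      exact max_le (abs_nonneg _) (le_abs_self _)
    refine h0.trans ?_
    have h1 : |1 - s * ∑ j, w j * x j + c| ≤ 1 + |c| + |s| * |∑ j, w j * x j| := by
      calc |1 - s * ∑ j, w j * x j + c| ≤ |1 + c| + |s * ∑ j, w j * x j| := by
            rw [show (1:ℝ) - s * ∑ j, w j * x j + c = (1 + c) - s * ∑ j, w j * x j by ring]
            exact abs_sub _ _
        _ ≤ 1 + |c| + |s| * |∑ j, w j * x j| := by
            rw [abs_mul]
            exact add_le_add ((abs_add_le 1 c).trans (by norm_num)) le_rfl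
    refine h1.trans ?_
    refine add_le_add le_rfl (mul_le_mul_of_nonneg_left ?_ (abs_nonneg s))
    calc |∑ j, w j * x j| ≤ ∑ j, |w j * x j| := Finset.abs_sum_le_sum_abs _ _
      _ = ∑ j, |w j| * |x j| := by simp [abs_mul]

lemma hinge_integrable {d : ℕ} (η : Fin d → Measure ℝ) [∀ j, IsProbabilityMeasure (η j)]
    (hint : ∀ j, Integrable (fun t : ℝ => t) (η j)) (s ε : ℝ) (w : Fin d → ℝ)
    (g : (Fin d → ℝ) → Fin d → ℝ) (hg : Measurable g) (hgb : ∀ x j, |g x j| ≤ ε) :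
    Integrable (fun x : Fin d → ℝ => max 0 (1 - s * ∑ j, w j * (x j + g x j)))
      (Measure.pi η) := by
  have hmeas : Measurable fun x : Fin d → ℝ => max 0 (1 - s * ∑ j, w j * (x j + g x j)) := by
    apply measurable_const.max
    apply Measurable.const_sub
    exact (Finset.measurable_sum univ fun j _ =>
      ((measurable_pi_apply j).add ((measurable_pi_apply j).comp hg)).const_mul (w j)).const_mul s
  refine Integrable.mono' (g := fun x => 1 + |s| * ∑ j, (|w j| * |x j| + |w j| * |ε|)) ?_
    hmeas.aestronglyMeasurable ?_
  · refine (integrable_const _).add (Integrable.const_mul ?_ _)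
    exact integrable_finset_sum univ fun j _ =>
      (((eval_integrable η j (hint j)).abs.const_mul (|w j|)).add (integrable_const _))
  · refine Filter.Eventually.of_forall fun x => ?_
    have h0 : |max 0 (1 - s * ∑ j, w j * (x j + g x j))|
        ≤ |1 - s * ∑ j, w j * (x j + g x j)| := by
      rw [abs_of_nonneg (le_max_left _ _)]
      exact max_le (abs_nonneg _) (le_abs_self _)
    refine h0.trans ?_
    have h1 : |1 - s * ∑ j, w j * (x j + g x j)| ≤ 1 + |s| * |∑ j, w j * (x j + g x j)| := by
      calc _ ≤ |(1:ℝ)| + |s * ∑ j, w j * (x j + g x j)| := abs_sub _ _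
        _ = 1 + |s| * |∑ j, w j * (x j + g x j)| := by rw [abs_one, abs_mul]
    refine h1.trans ?_
    refine add_le_add le_rfl (mul_le_mul_of_nonneg_left ?_ (abs_nonneg s))
    calc |∑ j, w j * (x j + g x j)| ≤ ∑ j, |w j * (x j + g x j)| := Finset.abs_sum_le_sum_abs _ _
      _ ≤ ∑ j, (|w j| * |x j| + |w j| * |ε|) := by
          refine Finset.sum_le_sum fun j _ => ?_
          rw [abs_mul, ← mul_add]
          refine mul_le_mul_of_nonneg_left ?_ (abs_nonneg _)
          exact (abs_add_le _ _).trans (add_le_add le_rfl ((hgb x j).trans (le_abs_self ε)))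

lemma payoff_meas {d : ℕ} (w : Fin d → ℝ) (δ : (Fin d → ℝ) × ℝ → Fin d → ℝ)
    (hδ : Measurable δ) :
    Measurable fun p : (Fin d → ℝ) × ℝ => max 0 (1 - p.2 * ∑ j, w j * (p.1 j + δ p j)) := by
  apply measurable_const.max
  apply Measurable.sub measurable_const
  apply Measurable.mul measurable_snd
  exact Finset.measurable_sum univ fun j _ =>
    (((measurable_pi_apply j).comp measurable_fst).add
      ((measurable_pi_apply j).comp hδ)).const_mul (w j)

lemma joint_integral' {d : ℕ} (ηp ηn : Fin d → Measure ℝ)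
    [∀ i, IsProbabilityMeasure (ηp i)] [∀ i, IsProbabilityMeasure (ηn i)]
    (q : ℝ≥0∞) (hq : q ≤ 1) (f : (Fin d → ℝ) × ℝ → ℝ) (hf : Measurable f)
    (h1 : Integrable (fun x => f (x, 1)) (Measure.pi ηp))
    (h2 : Integrable (fun x => f (x, -1)) (Measure.pi ηn)) :
    ∫ p, f p ∂(q • (Measure.pi ηp).map (fun x => (x, (1 : ℝ))) +
      (1 - q) • (Measure.pi ηn).map (fun x => (x, (-1 : ℝ)))) =
      q.toReal * ∫ x, f (x, 1) ∂Measure.pi ηp +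
        (1 - q).toReal * ∫ x, f (x, -1) ∂Measure.pi ηn := by
  have hm1 : Measurable (fun x : Fin d → ℝ => (x, (1:ℝ))) :=
    measurable_id.prodMk measurable_const
  have hm2 : Measurable (fun x : Fin d → ℝ => (x, (-1:ℝ))) :=
    measurable_id.prodMk measurable_const
  have hi1 : Integrable f ((Measure.pi ηp).map (fun x => (x, (1:ℝ)))) :=
    (integrable_map_measure hf.aestronglyMeasurable hm1.aemeasurable).2 h1
  have hi2 : Integrable f ((Measure.pi ηn).map (fun x => (x, (-1:ℝ)))) :=
    (integrable_map_measure hf.aestronglyMeasurable hm2.aemeasurable).2 h2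
  have hq1 : q ≠ ⊤ := ne_top_of_le_ne_top ENNReal.one_ne_top hq
  have hq2 : (1 - q) ≠ ⊤ := ne_top_of_le_ne_top ENNReal.one_ne_top tsub_le_self
  rw [integral_add_measure (hi1.smul_measure hq1) (hi2.smul_measure hq2),
    integral_smul_measure, integral_smul_measure,
    integral_map hm1.aemeasurable hf.aestronglyMeasurable,
    integral_map hm2.aemeasurable hf.aestronglyMeasurable]
  simp [smul_eq_mul]

lemma classC {d : ℕ} (η : Fin d → Measure ℝ) [∀ j, IsProbabilityMeasure (η j)]
    (hint : ∀ j, Integrable (fun t : ℝ => t) (η j)) (s ε : ℝ) (hs1 : |s| ≤ 1)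
    (w : Fin d → ℝ) (g : (Fin d → ℝ) → Fin d → ℝ) (hg : Measurable g)
    (hgb : ∀ x j, |g x j| ≤ ε) :
    ∫ x, max 0 (1 - s * ∑ j, w j * (x j + g x j)) ∂Measure.pi η
      ≤ ∫ x, max 0 (1 - s * ∑ j, w j * x j + ε * ∑ j, |w j|) ∂Measure.pi η := by
  refine integral_mono (hinge_integrable η hint s ε w g hg hgb)
    (robust_integrable η hint s _ w) fun x => ?_
  simp only
  have h1 : ∑ j, w j * (x j + g x j) = ∑ j, w j * x j + ∑ j, w j * g x j := by
    rw [← Finset.sum_add_distrib]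
    exact Finset.sum_congr rfl fun j _ => by ring
  rw [h1]
  refine max_le_max le_rfl ?_
  have h2 : |s * ∑ j, w j * g x j| ≤ ε * ∑ j, |w j| := by
    rw [abs_mul]
    calc |s| * |∑ j, w j * g x j| ≤ 1 * ∑ j, (|w j| * ε) := by
          refine mul_le_mul hs1 ?_ (abs_nonneg _) zero_le_one
          refine (Finset.abs_sum_le_sum_abs _ _).trans (Finset.sum_le_sum fun j _ => ?_)
          rw [abs_mul]
          exact mul_le_mul_of_nonneg_left (hgb x j) (abs_nonneg _)
      _ = ε * ∑ j, |w j| := by rw [one_mul, ← Finset.sum_mul, mul_comm]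
  have h3 := neg_abs_le (s * ∑ j, w j * g x j)
  linarith

lemma core {n : ℕ} (η : Fin (n+1) → Measure ℝ) [∀ j, IsProbabilityMeasure (η j)]
    (hint : ∀ j, Integrable (fun t : ℝ => t) (η j)) (s ε : ℝ)
    (hε : 0 ≤ ε) (i : Fin (n+1)) (w : Fin (n+1) → ℝ)
    (hmean : s * w i * (∫ t, t ∂η i) ≤ ε * |w i|) :
    ∫ x, max 0 (1 - s * ∑ j, Function.update w i 0 j * x j
        + ε * ∑ j, |Function.update w i 0 j|) ∂Measure.pi η
      ≤ ∫ x, max 0 (1 - s * ∑ j, w j * x j + ε * ∑ j, |w j|) ∂Measure.pi η := by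
  set w' : Fin (n+1) → ℝ := Function.update w i 0 with hw'
  set t : ℝ := w i with ht
  set C : (Fin (n+1) → ℝ) → ℝ :=
    fun x => 1 - s * ∑ j, w' j * x j + ε * ∑ j, |w' j| with hC
  set u : (Fin (n+1) → ℝ) → ℝ := fun x => ε * |t| - s * t * x i with hu
  have hCmeas : Measurable C := by
    apply Measurable.add_const _ _
    apply Measurable.const_sub
    exact (Finset.measurable_sum univ fun j _ =>
      (measurable_pi_apply j : Measurable fun x : Fin (n+1) → ℝ => x j).const_mul (w' j)).const_mul s
  have hsum1 : ∀ x : Fin (n+1) → ℝ, ∑ j, w j * x j = t * x i + ∑ j, w' j * x j := by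
    intro x
    have h1 := sum_split i (fun j => w j * x j)
    have h2 : ∀ j, Function.update (fun j => w j * x j) i 0 j = w' j * x j := by
      intro j
      rcases eq_or_ne j i with rfl | hne
      · simp [hw']
      · simp [Function.update_of_ne hne, hw']
    rw [h1]
    simp only [h2]
    rfl
  have hsum2 : ∑ j, |w j| = |t| + ∑ j, |w' j| := by
    have h1 := sum_split i (fun j => |w j|)
    have h2 : ∀ j, Function.update (fun j => |w j|) i 0 j = |w' j| := by
      intro j
      rcases eq_or_ne j i with rfl | hne
      · simp [hw']
      · simp [Function.update_of_ne hne, hw']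
    rw [h1]
    simp only [h2]
    rfl
  have hkey : ∀ x : Fin (n+1) → ℝ,
      1 - s * ∑ j, w j * x j + ε * ∑ j, |w j| = C x + u x := by
    intro x
    rw [hsum1 x, hsum2]
    simp only [hC, hu]
    ring
  have hpt : ∀ x : Fin (n+1) → ℝ,
      max 0 (C x) + u x * (if 0 ≤ C x then (1:ℝ) else 0)
        ≤ max 0 (1 - s * ∑ j, w j * x j + ε * ∑ j, |w j|) := by
    intro x
    rw [hkey x]
    by_cases h : 0 ≤ C x
    · rw [if_pos h, mul_one, max_eq_right h]
      exact le_max_right _ _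
    · rw [if_neg h, mul_zero, add_zero, max_eq_left (le_of_not_ge h)]
      exact le_max_left _ _
  have hICfun : (fun x : Fin (n+1) → ℝ => max 0 (C x))
      = fun x => max 0 (1 - s * ∑ j, w' j * x j + ε * ∑ j, |w' j|) := rfl
  have hIC : Integrable (fun x => max 0 (C x)) (Measure.pi η) := by
    rw [hICfun]; exact robust_integrable η hint s _ w'
  have humeas : Measurable fun x : Fin (n+1) → ℝ =>
      u x * (if 0 ≤ C x then (1:ℝ) else 0) := by
    refine Measurable.mul ?_ ?_
    · exact Measurable.const_sub ((measurable_pi_apply i).const_mul _) _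
    · exact Measurable.ite (measurableSet_le measurable_const hCmeas)
        measurable_const measurable_const
  have hIu : Integrable (fun x : Fin (n+1) → ℝ =>
      u x * (if 0 ≤ C x then (1:ℝ) else 0)) (Measure.pi η) := by
    refine Integrable.mono' (g := fun x => ε * |t| + |s * t| * |x i|) ?_
      humeas.aestronglyMeasurable ?_
    · exact (integrable_const _).add
        ((eval_integrable η i (hint i)).abs.const_mul _)
    · refine Filter.Eventually.of_forall fun x => ?_
      have h1 : |(if 0 ≤ C x then (1:ℝ) else 0)| ≤ 1 := by
        split <;> norm_num
      have h2 : |u x| ≤ ε * |t| + |s * t| * |x i| := by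
        have h3 := abs_sub (ε * |t|) (s * t * x i)
        refine h3.trans ?_
        rw [abs_mul (s * t) (x i), abs_mul ε, abs_abs, abs_of_nonneg hε]
      calc ‖u x * (if 0 ≤ C x then (1:ℝ) else 0)‖
          = |u x| * |(if 0 ≤ C x then (1:ℝ) else 0)| := abs_mul _ _
        _ ≤ |u x| * 1 := mul_le_mul_of_nonneg_left h1 (abs_nonneg _)
        _ = |u x| := mul_one _
        _ ≤ ε * |t| + |s * t| * |x i| := h2
  have hIA : Integrable (fun x : Fin (n+1) → ℝ =>
      max 0 (1 - s * ∑ j, w j * x j + ε * ∑ j, |w j|)) (Measure.pi η) :=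
    robust_integrable η hint s _ w
  have hind : 0 ≤ ∫ x, u x * (if 0 ≤ C x then (1:ℝ) else 0) ∂Measure.pi η := by
    have hmp := measurePreserving_piFinSuccAbove (fun k => η k) i
    set e := MeasurableEquiv.piFinSuccAbove (fun _ : Fin (n+1) => ℝ) i with he
    set D : (Fin n → ℝ) → ℝ :=
      fun y => 1 - s * ∑ j, w' (i.succAbove j) * y j + ε * ∑ j, |w' j| with hD
    set g : ℝ × (Fin n → ℝ) → ℝ :=
      fun z => (ε * |t| - s * t * z.1) * (if 0 ≤ D z.2 then (1:ℝ) else 0) with hg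
    have hcomp : ∀ x : Fin (n+1) → ℝ,
        u x * (if 0 ≤ C x then (1:ℝ) else 0) = g (e x) := by
      intro x
      have hex : e x = (x i, fun j => x (i.succAbove j)) := rfl
      have hCD : C x = D (fun j => x (i.succAbove j)) := by
        simp only [hC, hD]
        congr 1
        congr 1
        congr 1
        rw [Fin.sum_univ_succAbove (fun j => w' j * x j) i]
        simp [hw']
      rw [hex]
      simp only [hg, hu, hCD]
    have step1 : ∫ x, u x * (if 0 ≤ C x then (1:ℝ) else 0) ∂Measure.pi η
        = ∫ z, g z ∂((η i).prod (Measure.pi fun j => η (i.succAbove j))) := by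
      rw [show (fun x : Fin (n+1) → ℝ => u x * (if 0 ≤ C x then (1:ℝ) else 0))
        = fun x => g (e x) from funext hcomp]
      exact hmp.integral_comp' g
    have step2 : ∫ z, g z ∂((η i).prod (Measure.pi fun j => η (i.succAbove j)))
        = (∫ a, (ε * |t| - s * t * a) ∂η i) *
          ∫ y, (if 0 ≤ D y then (1:ℝ) else 0) ∂(Measure.pi fun j => η (i.succAbove j)) :=
      MeasureTheory.integral_prod_mul (fun a => ε * |t| - s * t * a)
        (fun y => if 0 ≤ D y then (1:ℝ) else 0)
    have hmean' : 0 ≤ ∫ a, (ε * |t| - s * t * a) ∂η i := by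
      have : ∫ a, (ε * |t| - s * t * a) ∂η i
          = ε * |t| - s * t * ∫ a, a ∂η i := by
        rw [integral_sub (integrable_const _) ((hint i).const_mul _), integral_const,
          integral_const_mul]
        simp [measure_univ]
      rw [this]
      linarith [hmean]
    have hpsi : 0 ≤ ∫ y, (if 0 ≤ D y then (1:ℝ) else 0)
        ∂(Measure.pi fun j => η (i.succAbove j)) := by
      refine integral_nonneg fun y => ?_
      simp only [Pi.zero_apply]
      split <;> norm_num
    rw [step1, step2]
    exact mul_nonneg hmean' hpsi
  rw [← hICfun]
  calc ∫ x, max 0 (C x) ∂Measure.pi η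
      ≤ (∫ x, max 0 (C x) ∂Measure.pi η)
        + ∫ x, u x * (if 0 ≤ C x then (1:ℝ) else 0) ∂Measure.pi η :=
        le_add_of_nonneg_right hind
    _ = ∫ x, (max 0 (C x) + u x * (if 0 ≤ C x then (1:ℝ) else 0)) ∂Measure.pi η :=
        (integral_add hIC hIu).symm
    _ ≤ ∫ x, max 0 (1 - s * ∑ j, w j * x j + ε * ∑ j, |w j|) ∂Measure.pi η :=
        integral_mono (hIC.add hIu) hIA hpt

/-- The joint distribution of `(x,y)` on `ℝ^d × {-1,1}`: with probability `q` the label is `1`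
and the features are drawn from the product measure `Measure.pi ηp` (features conditionally
independent given the label), with probability `1-q` the label is `-1` and the features are
drawn from `Measure.pi ηn`. -/
noncomputable def jointMeasure {d : ℕ} (ηp ηn : Fin d → Measure ℝ) (q : ℝ≥0∞) :
    Measure ((Fin d → ℝ) × ℝ) :=
  q • (Measure.pi ηp).map (fun x => (x, (1 : ℝ))) +
    (1 - q) • (Measure.pi ηn).map (fun x => (x, (-1 : ℝ)))

/-- The regularized soft-SVM objective. -/
noncomputable def svmLoss {d : ℕ} (μ : Measure ((Fin d → ℝ) × ℝ)) (lam : ℝ)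
    (w : Fin d → ℝ) : ℝ :=
  (∫ p, max 0 (1 - p.2 * ∑ i, w i * p.1 i) ∂μ) + lam / 2 * ∑ i, (w i) ^ 2

/-- The payoff of the SLAR game: expected hinge loss on the perturbed data plus the
ℓ₂ regularizer. The row player (adversary) chooses the perturbation function `δ` to maximize
it; the column player chooses `w` to minimize it. -/
noncomputable def slarPayoff {d : ℕ} (μ : Measure ((Fin d → ℝ) × ℝ)) (lam : ℝ)
    (δ : (Fin d → ℝ) × ℝ → Fin d → ℝ) (w : Fin d → ℝ) : ℝ :=
  (∫ p, max 0 (1 - p.2 * ∑ i, w i * (p.1 i + δ p i)) ∂μ) + lam / 2 * ∑ i, (w i) ^ 2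

/-- at a pure-strategy Nash equilibrium `(δ*, w*)` of the SLAR game, every
non-robust feature `i` (one with `|μᵢ| ≤ ε`, where `E[xᵢ|y] = yμᵢ`) receives zero weight:
`wᵢ* = 0`. -/
theorem nash_equilibrium_is_robust {d : ℕ} (ηp ηn : Fin d → Measure ℝ)
    [∀ i, IsProbabilityMeasure (ηp i)] [∀ i, IsProbabilityMeasure (ηn i)]
    (q : ℝ≥0∞) (hq : q ≤ 1) (lam ε : ℝ) (hlam : 0 < lam) (hε : 0 ≤ ε)
    (μv : Fin d → ℝ)
    (hip : ∀ j, Integrable (fun t : ℝ => t) (ηp j))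
    (hin : ∀ j, Integrable (fun t : ℝ => t) (ηn j))
    (hmeanp : ∀ i, (∫ t, t ∂(ηp i)) = μv i)
    (hmeann : ∀ i, (∫ t, t ∂(ηn i)) = -(μv i))
    (δstar : (Fin d → ℝ) × ℝ → Fin d → ℝ) (wstar : Fin d → ℝ)
    (hδstar_meas : Measurable δstar)
    (hδstar_bdd : ∀ p i, |δstar p i| ≤ ε)
    (hrow : ∀ δ : (Fin d → ℝ) × ℝ → Fin d → ℝ, Measurable δ → (∀ p i, |δ p i| ≤ ε) →
      slarPayoff (jointMeasure ηp ηn q) lam δ wstar ≤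
        slarPayoff (jointMeasure ηp ηn q) lam δstar wstar)
    (hcol : ∀ w, slarPayoff (jointMeasure ηp ηn q) lam δstar wstar ≤
      slarPayoff (jointMeasure ηp ηn q) lam δstar w)
    (i : Fin d) (hnonrobust : |μv i| ≤ ε) :
    wstar i = 0 := by
  obtain ⟨n, rfl⟩ := Nat.exists_eq_succ_of_ne_zero (Nat.pos_iff_ne_zero.mp i.pos)
  -- the adversary's "worst-case" perturbation against `wstar`
  set δh : (Fin (n+1) → ℝ) × ℝ → Fin (n+1) → ℝ :=
    fun p j => -(ε * sg p.2 * sg (wstar j)) with hδh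
  have hδhm : Measurable δh := by
    rw [hδh]
    refine measurable_pi_lambda _ fun j => ?_
    exact (((measurable_sg.comp measurable_snd).const_mul ε).mul_const (sg (wstar j))).neg
  have hδhb : ∀ p j, |δh p j| ≤ ε := by
    intro p j
    simp only [hδh]
    rw [abs_neg, abs_mul, abs_mul, sg_abs, sg_abs, abs_of_nonneg hε]
    norm_num
  have hss1 : (1:ℝ) * sg 1 = 1 := by norm_num [sg]
  have hssm1 : (-1:ℝ) * sg (-1) = 1 := by norm_num [sg]
  -- abbreviations
  set w' : Fin (n+1) → ℝ := Function.update wstar i 0 with hw'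
  -- decomposition of the payoff of δh against wstar
  have D1 : slarPayoff (jointMeasure ηp ηn q) lam δh wstar
      = q.toReal * (∫ x, max 0 (1 - (1:ℝ) * ∑ j, wstar j * x j
            + ε * ∑ j, |wstar j|) ∂Measure.pi ηp)
        + (1 - q).toReal * (∫ x, max 0 (1 - (-1:ℝ) * ∑ j, wstar j * x j
            + ε * ∑ j, |wstar j|) ∂Measure.pi ηn)
        + lam / 2 * ∑ j, (wstar j) ^ 2 := by
    unfold slarPayoff jointMeasure
    rw [joint_integral' ηp ηn q hq _ (payoff_meas wstar δh hδhm)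
      (hinge_integrable ηp hip 1 ε wstar (fun x => δh (x, 1))
        (hδhm.comp (measurable_id.prodMk measurable_const)) (fun x j => hδhb (x, 1) j))
      (hinge_integrable ηn hin (-1) ε wstar (fun x => δh (x, -1))
        (hδhm.comp (measurable_id.prodMk measurable_const)) (fun x j => hδhb (x, -1) j))]
    congr 2
    · congr 1
      refine integral_congr_ae (Filter.EventuallyEq.of_eq (funext fun x => ?_))
      show max 0 (1 - (1:ℝ) * ∑ j, wstar j * (x j + -(ε * sg 1 * sg (wstar j)))) = _
      rw [robust_eval wstar x ε 1 hss1]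
    · congr 1
      refine integral_congr_ae (Filter.EventuallyEq.of_eq (funext fun x => ?_))
      show max 0 (1 - (-1:ℝ) * ∑ j, wstar j * (x j + -(ε * sg (-1) * sg (wstar j)))) = _
      rw [robust_eval wstar x ε (-1) hssm1]
  -- decomposition of the payoff of δstar against w'
  have D2 : slarPayoff (jointMeasure ηp ηn q) lam δstar w'
      = q.toReal * (∫ x, max 0 (1 - (1:ℝ) * ∑ j, w' j * (x j + δstar (x, 1) j))
            ∂Measure.pi ηp)
        + (1 - q).toReal * (∫ x, max 0 (1 - (-1:ℝ) * ∑ j, w' j * (x j + δstar (x, -1) j))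
            ∂Measure.pi ηn)
        + lam / 2 * ∑ j, (w' j) ^ 2 := by
    unfold slarPayoff jointMeasure
    rw [joint_integral' ηp ηn q hq _ (payoff_meas w' δstar hδstar_meas)
      (hinge_integrable ηp hip 1 ε w' (fun x => δstar (x, 1))
        (hδstar_meas.comp (measurable_id.prodMk measurable_const))
        (fun x j => hδstar_bdd (x, 1) j))
      (hinge_integrable ηn hin (-1) ε w' (fun x => δstar (x, -1))
        (hδstar_meas.comp (measurable_id.prodMk measurable_const))
        (fun x j => hδstar_bdd (x, -1) j))]
  -- per-class comparisons
  have hCp : ∫ x, max 0 (1 - (1:ℝ) * ∑ j, w' j * (x j + δstar (x, 1) j)) ∂Measure.pi ηp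
      ≤ ∫ x, max 0 (1 - (1:ℝ) * ∑ j, w' j * x j + ε * ∑ j, |w' j|) ∂Measure.pi ηp :=
    classC ηp hip 1 ε (by norm_num) w' (fun x => δstar (x, 1))
      (hδstar_meas.comp (measurable_id.prodMk measurable_const))
      (fun x j => hδstar_bdd (x, 1) j)
  have hCn : ∫ x, max 0 (1 - (-1:ℝ) * ∑ j, w' j * (x j + δstar (x, -1) j)) ∂Measure.pi ηn
      ≤ ∫ x, max 0 (1 - (-1:ℝ) * ∑ j, w' j * x j + ε * ∑ j, |w' j|) ∂Measure.pi ηn :=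
    classC ηn hin (-1) ε (by norm_num) w' (fun x => δstar (x, -1))
      (hδstar_meas.comp (measurable_id.prodMk measurable_const))
      (fun x j => hδstar_bdd (x, -1) j)
  -- the core inequalities : dropping a non-robust feature decreases the robust loss
  have hbase : wstar i * μv i ≤ ε * |wstar i| :=
    calc wstar i * μv i ≤ |wstar i * μv i| := le_abs_self _
      _ = |wstar i| * |μv i| := abs_mul _ _
      _ ≤ |wstar i| * ε := mul_le_mul_of_nonneg_left hnonrobust (abs_nonneg _)
      _ = ε * |wstar i| := mul_comm _ _
  have hBp : ∫ x, max 0 (1 - (1:ℝ) * ∑ j, w' j * x j + ε * ∑ j, |w' j|) ∂Measure.pi ηp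
      ≤ ∫ x, max 0 (1 - (1:ℝ) * ∑ j, wstar j * x j + ε * ∑ j, |wstar j|) ∂Measure.pi ηp := by
    rw [hw']
    refine core ηp hip 1 ε hε i wstar ?_
    rw [hmeanp i]
    linarith
  have hBn : ∫ x, max 0 (1 - (-1:ℝ) * ∑ j, w' j * x j + ε * ∑ j, |w' j|) ∂Measure.pi ηn
      ≤ ∫ x, max 0 (1 - (-1:ℝ) * ∑ j, wstar j * x j + ε * ∑ j, |wstar j|) ∂Measure.pi ηn := by
    rw [hw']
    refine core ηn hin (-1) ε hε i wstar ?_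
    rw [hmeann i]
    have : (-1:ℝ) * wstar i * -(μv i) = wstar i * μv i := by ring
    rw [this]
    exact hbase
  -- the regularizer identity
  have hreg : ∑ j, (w' j) ^ 2 = ∑ j, (wstar j) ^ 2 - (wstar i) ^ 2 := by
    have h1 := sum_split i (fun j => (wstar j) ^ 2)
    have h2 : ∀ j, Function.update (fun j => (wstar j) ^ 2) i 0 j = (w' j) ^ 2 := by
      intro j
      rcases eq_or_ne j i with rfl | hne
      · simp [hw']
      · simp [Function.update_of_ne hne, hw']
    rw [h1]
    simp only [h2]
    ring
  -- nonnegativity of the class weights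
  have hqp : 0 ≤ q.toReal := ENNReal.toReal_nonneg
  have hqn : 0 ≤ (1 - q).toReal := ENNReal.toReal_nonneg
  -- assemble the chain
  have c1 := hrow δh hδhm hδhb
  have c2 := hcol w'
  have mp := mul_le_mul_of_nonneg_left (hCp.trans hBp) hqp
  have mn := mul_le_mul_of_nonneg_left (hCn.trans hBn) hqn
  rw [D1] at c1
  rw [D2] at c2
  have final : lam / 2 * (wstar i) ^ 2 ≤ 0 := by nlinarith [c1, c2, mp, mn, hreg]
  have ht2 : (wstar i) ^ 2 ≤ 0 := by nlinarith
  exact pow_eq_zero_iff (two_ne_zero) |>.mp (le_antisymm ht2 (sq_nonneg _))
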